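/- arXiv:2110.06426 — 2 statements merged into one kernel-verified Lean document; each statement's English description precedes it below -/
import Mathlib

section
/- Let m ≥ 2 be a fixed integer and let f be a probability density on (0,1) satisfying 0 < c_f ≤ f(t) ≤ C_f for all t ∈ (0,1). For each n ≥ 1 let (t_{i,j}), i = 1,…,n, j = 1,…,m, be i.i.d. random variables with density f, and for h > 0 let Ñ_h = #{(i,j) : 1 ≤ i ≤ n, 1 ≤ j ≤ m−1, t_{i,(j+1)} − t_{i,(j)} < h}. Then there exist constants 0 < c₁ ≤ c₂ < ∞ and h₀ > 0, depending only on m, c_f, C_f, such that c₁·n·h ≤ E[Ñ_h] ≤ c₂·n·h for every n ≥ 1 and every h ∈ (0, h₀]. -/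
open MeasureTheory ProbabilityTheory Filter

/-- The `j`-th order statistic (0-indexed) of the tuple `v`. -/
noncomputable def sortedVal {m : ℕ} (v : Fin m → ℝ) (j : ℕ) : ℝ :=
  if h : j < m then v (Tuple.sort v ⟨j, h⟩) else 0

/-- `Ñ_h`: the number of pairs `(i, j)`, `1 ≤ i ≤ n`, `1 ≤ j ≤ m - 1`, such that the
consecutive order-statistic spacing `t_{i,(j+1)} - t_{i,(j)}` is smaller than `h`. -/
noncomputable def spacingCount (n m : ℕ) (T : Fin n → Fin m → ℝ) (h : ℝ) : ℝ :=
  ∑ i : Fin n, ∑ j ∈ Finset.range (m - 1),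
    if sortedVal (fun k => T i k) (j + 1) - sortedVal (fun k => T i k) j < h then (1 : ℝ) else 0

lemma sortedVal_mono {m : ℕ} (v : Fin m → ℝ) {j k : ℕ} (hjk : j ≤ k) (hk : k < m) :
    sortedVal v j ≤ sortedVal v k := by
  have hj : j < m := lt_of_le_of_lt hjk hk
  rw [sortedVal, sortedVal, dif_pos hj, dif_pos hk]
  exact Tuple.monotone_sort v (show (⟨j, hj⟩ : Fin m) ≤ ⟨k, hk⟩ from hjk)

lemma sortedVal_le_iff {m : ℕ} (v : Fin m → ℝ) {j : ℕ} (hj : j < m) (t : ℝ) :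
    sortedVal v j ≤ t ↔ ∃ s : Finset (Fin m), s.card = j + 1 ∧ ∀ k ∈ s, v k ≤ t := by
  set σ := Tuple.sort v with hσ
  constructor
  · intro ht
    refine ⟨(Finset.Iic (⟨j, hj⟩ : Fin m)).image σ, ?_, ?_⟩
    · rw [Finset.card_image_of_injective _ σ.injective, Fin.card_Iic]
    · intro k hk
      simp only [Finset.mem_image, Finset.mem_Iic] at hk
      obtain ⟨i, hi, rfl⟩ := hk
      calc v (σ i) ≤ v (σ ⟨j, hj⟩) := Tuple.monotone_sort v hi
        _ ≤ t := by rwa [sortedVal, dif_pos hj] at ht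
  · rintro ⟨s, hcard, hs⟩
    have : ∃ i : Fin m, σ i ∈ s ∧ j ≤ i.val := by
      by_contra hcon
      push_neg at hcon
      have hsub : s.image σ.symm ⊆ Finset.Iio (⟨j, hj⟩ : Fin m) := by
        intro i hi
        simp only [Finset.mem_image] at hi
        obtain ⟨k, hk, rfl⟩ := hi
        have := hcon (σ.symm k) (by simpa using hk)
        simpa [Finset.mem_Iio, Fin.lt_def] using this
      have := Finset.card_le_card hsub
      rw [Finset.card_image_of_injective _ σ.symm.injective, hcard, Fin.card_Iio] at this
      have hv : ((⟨j, hj⟩ : Fin m) : ℕ) = j := rfl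
      rw [hv] at this
      omega
    obtain ⟨i, his, hji⟩ := this
    rw [sortedVal, dif_pos hj]
    calc v (σ ⟨j, hj⟩) ≤ v (σ i) := Tuple.monotone_sort v (show (⟨j, hj⟩ : Fin m) ≤ i from hji)
      _ ≤ t := hs _ his

lemma measurable_sortedVal {m : ℕ} (j : ℕ) :
    Measurable fun v : Fin m → ℝ => sortedVal v j := by
  by_cases hj : j < m
  · apply measurable_of_Iic
    intro t
    have : (fun v : Fin m → ℝ => sortedVal v j) ⁻¹' Set.Iic t
        = ⋃ s : Finset (Fin m), ⋃ (_ : s.card = j + 1), {v : Fin m → ℝ | ∀ k ∈ s, v k ≤ t} := by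
      ext v
      simp only [Set.mem_preimage, Set.mem_Iic, sortedVal_le_iff v hj, Set.mem_iUnion,
        Set.mem_setOf_eq]
      tauto
    rw [this]
    refine MeasurableSet.iUnion fun s => MeasurableSet.iUnion fun _ => ?_
    have : {v : Fin m → ℝ | ∀ k ∈ s, v k ≤ t} = ⋂ k ∈ s, {v : Fin m → ℝ | v k ≤ t} := by
      ext v; simp
    rw [this]
    exact MeasurableSet.biInter s.countable_toSet fun k _ =>
      measurableSet_le (measurable_pi_apply k) measurable_const
  · have : (fun v : Fin m → ℝ => sortedVal v j) = fun _ => 0 := by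
      funext v; rw [sortedVal, dif_neg hj]
    rw [this]; exact measurable_const

-- L1: if two of the values are within h, some consecutive spacing is < h
-- L1: if two of the values are within h, some consecutive spacing is < h
lemma exists_spacing_lt {m : ℕ} (hm : 2 ≤ m) (v : Fin m → ℝ) {h : ℝ}
    (hv : |v ⟨0, by omega⟩ - v ⟨1, by omega⟩| < h) :
    ∃ j ∈ Finset.range (m - 1),
      sortedVal v (j + 1) - sortedVal v j < h := by
  have hh : 0 < h := lt_of_le_of_lt (abs_nonneg _) hv
  by_contra hcon
  push_neg at hcon
  set σ := Tuple.sort v with hσ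
  set z : Fin m := ⟨0, by omega⟩ with hz
  set o : Fin m := ⟨1, by omega⟩ with ho
  have h01 : z ≠ o := by
    intro hE
    have := congrArg Fin.val hE
    simp [hz, ho] at this
  set a : Fin m := σ.symm z with ha
  set b : Fin m := σ.symm o with hb
  have hab : a ≠ b := fun hE => h01 (σ.symm.injective hE)
  have habv : a.val ≠ b.val := fun hE => hab (Fin.ext hE)
  set A : ℕ := min a.val b.val with hA
  set B : ℕ := max a.val b.val with hB
  have hABlt : A < B := by omega
  have hBm : B < m := by
    have := a.isLt; have := b.isLt; omega
  -- key induction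
  have key : ∀ k : ℕ, A + k ≤ B → sortedVal v A + k * h ≤ sortedVal v (A + k) := by
    intro k
    induction k with
    | zero => intro _; simp
    | succ k ih =>
      intro hk
      have hk' : A + k ≤ B := by omega
      have hj : A + k ∈ Finset.range (m - 1) := by
        rw [Finset.mem_range]; omega
      have h1 := hcon (A + k) hj
      have h2 := ih hk'
      have e : A + (k + 1) = (A + k) + 1 := rfl
      rw [e]
      push_cast
      nlinarith [h1, h2]
  have hkey := key (B - A) (by omega)
  rw [Nat.add_sub_cancel' hABlt.le] at hkey
  have hstep : h ≤ sortedVal v B - sortedVal v A := by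
    have h1 : (1 : ℝ) ≤ ((B - A : ℕ) : ℝ) := by
      have : 1 ≤ B - A := by omega
      exact_mod_cast this
    nlinarith [hkey]
  have hAm : A < m := lt_trans hABlt hBm
  have hAB : ({σ ⟨A, hAm⟩, σ ⟨B, hBm⟩} : Set (Fin m)) = {z, o} := by
    rcases le_total a.val b.val with hle | hle
    · have e1 : (⟨A, hAm⟩ : Fin m) = a := by apply Fin.ext; show A = a.val; omega
      have e2 : (⟨B, hBm⟩ : Fin m) = b := by apply Fin.ext; show B = b.val; omega
      rw [e1, e2, ha, hb, Equiv.apply_symm_apply, Equiv.apply_symm_apply]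
    · have e1 : (⟨A, hAm⟩ : Fin m) = b := by apply Fin.ext; show A = b.val; omega
      have e2 : (⟨B, hBm⟩ : Fin m) = a := by apply Fin.ext; show B = a.val; omega
      rw [e1, e2, ha, hb, Equiv.apply_symm_apply, Equiv.apply_symm_apply]
      exact Set.pair_comm o z
  have hvals : sortedVal v B - sortedVal v A ≤ |v z - v o| := by
    rw [sortedVal, sortedVal, dif_pos hAm, dif_pos hBm]
    have hmem : σ (⟨A, hAm⟩ : Fin m) ∈ ({z, o} : Set (Fin m)) := by
      rw [← hAB]; simp
    have hmem' : σ (⟨B, hBm⟩ : Fin m) ∈ ({z, o} : Set (Fin m)) := by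
      rw [← hAB]; simp
    simp only [Set.mem_insert_iff, Set.mem_singleton_iff] at hmem hmem'
    rcases hmem with hE | hE <;> rcases hmem' with hE' | hE' <;> rw [hE, hE']
    · simp [abs_nonneg]
    · rw [abs_sub_comm]; exact le_abs_self _
    · exact le_abs_self _
    · simp [abs_nonneg]
  exact absurd hv (not_lt.mpr (le_trans hstep hvals))

lemma sum_spacing_le {m : ℕ} (hm : 2 ≤ m) (v : Fin m → ℝ) (h : ℝ) :
    (∑ j ∈ Finset.range (m - 1),
      if sortedVal v (j + 1) - sortedVal v j < h then (1 : ℝ) else 0)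
    ≤ ∑ p : Fin m × Fin m,
        if p.1 ≠ p.2 ∧ |v p.1 - v p.2| < h then (1 : ℝ) else 0 := by
  set σ := Tuple.sort v with hσ
  set F : Fin m × Fin m → ℝ :=
    fun p => if p.1 ≠ p.2 ∧ |v p.1 - v p.2| < h then (1 : ℝ) else 0 with hF
  have hFnonneg : ∀ p, 0 ≤ F p := by
    intro p; rw [hF]; dsimp only; split_ifs <;> norm_num
  set e : ℕ → Fin m × Fin m :=
    fun j => (σ ⟨min j (m - 1), by omega⟩, σ ⟨min (j + 1) (m - 1), by omega⟩) with he
  have hej : ∀ j ∈ Finset.range (m - 1), ∀ (hj1 : j + 1 < m),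
      e j = (σ ⟨j, by omega⟩, σ ⟨j + 1, hj1⟩) := by
    intro j hj hj1
    rw [Finset.mem_range] at hj
    rw [he]
    dsimp only
    congr 1 <;> congr 1 <;> apply Fin.ext
    · show min j (m - 1) = j; omega
    · show min (j + 1) (m - 1) = j + 1; omega
  have step1 : (∑ j ∈ Finset.range (m - 1),
      if sortedVal v (j + 1) - sortedVal v j < h then (1 : ℝ) else 0)
      ≤ ∑ j ∈ Finset.range (m - 1), F (e j) := by
    apply Finset.sum_le_sum
    intro j hj
    have hjr := Finset.mem_range.mp hj
    have hj1 : j + 1 < m := by omega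
    rw [hej j hj hj1]
    by_cases hc : sortedVal v (j + 1) - sortedVal v j < h
    · rw [if_pos hc, hF]
      dsimp only
      rw [if_pos]
      constructor
      · intro hE
        have := σ.injective hE
        have := congrArg Fin.val this
        simp at this
      · have hd : sortedVal v (j + 1) - sortedVal v j =
            v (σ ⟨j + 1, hj1⟩) - v (σ ⟨j, by omega⟩) := by
          rw [sortedVal, sortedVal, dif_pos hj1, dif_pos (show j < m by omega)]
        have hmono : v (σ ⟨j, by omega⟩) ≤ v (σ ⟨j + 1, hj1⟩) :=
          Tuple.monotone_sort v (show (⟨j, by omega⟩ : Fin m) ≤ ⟨j + 1, hj1⟩ by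
            simp [Fin.le_def])
        rw [abs_sub_comm, abs_of_nonneg (by linarith [hd ▸ hc, hmono])]
        linarith [hd ▸ hc]
    · rw [if_neg hc]
      exact hFnonneg _
  have hinj : ∀ x ∈ Finset.range (m - 1), ∀ y ∈ Finset.range (m - 1), e x = e y → x = y := by
    intro x hx y hy hE
    have hx1 : x + 1 < m := by have := Finset.mem_range.mp hx; omega
    have hy1 : y + 1 < m := by have := Finset.mem_range.mp hy; omega
    rw [hej x hx hx1, hej y hy hy1] at hE
    have := congrArg Prod.fst hE
    have := σ.injective this
    have := congrArg Fin.val this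
    simpa using this
  have step2 : ∑ j ∈ Finset.range (m - 1), F (e j)
      = ∑ p ∈ (Finset.range (m - 1)).image e, F p :=
    (Finset.sum_image hinj).symm
  have step3 : ∑ p ∈ (Finset.range (m - 1)).image e, F p ≤ ∑ p : Fin m × Fin m, F p :=
    Finset.sum_le_sum_of_subset_of_nonneg (Finset.subset_univ _)
      (fun p _ _ => hFnonneg p)
  calc _ ≤ _ := step1
    _ = _ := step2
    _ ≤ _ := step3

section MeasureLemmas

variable {f : ℝ → ℝ} {cf Cf : ℝ}

lemma dens_le (hf : Measurable f) (hcf : 0 < cf) (hcC : cf ≤ Cf)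
    (hfb : ∀ x ∈ Set.Ioo (0 : ℝ) 1, cf ≤ f x ∧ f x ≤ Cf)
    (hf0 : ∀ x, x ∉ Set.Ioo (0 : ℝ) 1 → f x = 0)
    {A : Set ℝ} (hA : MeasurableSet A) :
    volume.withDensity (fun x => ENNReal.ofReal (f x)) A
      ≤ ENNReal.ofReal Cf * volume A := by
  rw [withDensity_apply _ hA]
  calc ∫⁻ x in A, ENNReal.ofReal (f x) ∂volume
      ≤ ∫⁻ _ in A, ENNReal.ofReal Cf ∂volume := by
        apply lintegral_mono
        intro x
        apply ENNReal.ofReal_le_ofReal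
        by_cases hx : x ∈ Set.Ioo (0 : ℝ) 1
        · exact (hfb x hx).2
        · rw [hf0 x hx]; linarith
    _ = ENNReal.ofReal Cf * volume A := by rw [setLIntegral_const]

lemma dens_ge (hf : Measurable f) (hcf : 0 < cf)
    (hfb : ∀ x ∈ Set.Ioo (0 : ℝ) 1, cf ≤ f x ∧ f x ≤ Cf)
    {A : Set ℝ} (hA : MeasurableSet A) (hA1 : A ⊆ Set.Ioo (0 : ℝ) 1) :
    ENNReal.ofReal cf * volume A
      ≤ volume.withDensity (fun x => ENNReal.ofReal (f x)) A := by
  rw [withDensity_apply _ hA]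
  calc ENNReal.ofReal cf * volume A = ∫⁻ _ in A, ENNReal.ofReal cf ∂volume := by
        rw [setLIntegral_const]
    _ ≤ ∫⁻ x in A, ENNReal.ofReal (f x) ∂volume := by
        apply setLIntegral_mono' hA
        intro x hx
        exact ENNReal.ofReal_le_ofReal (hfb x (hA1 hx)).1

lemma strip_measurable (h : ℝ) : MeasurableSet {p : ℝ × ℝ | |p.1 - p.2| < h} :=
  measurableSet_lt ((measurable_fst.sub measurable_snd).abs) measurable_const

lemma strip_upper (hf : Measurable f) (hcf : 0 < cf) (hcC : cf ≤ Cf)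
    (hfb : ∀ x ∈ Set.Ioo (0 : ℝ) 1, cf ≤ f x ∧ f x ≤ Cf)
    (hf0 : ∀ x, x ∉ Set.Ioo (0 : ℝ) 1 → f x = 0)
    {h : ℝ} (hh : 0 < h)
    (hP : IsProbabilityMeasure (volume.withDensity (fun x => ENNReal.ofReal (f x)))) :
    (volume.withDensity (fun x => ENNReal.ofReal (f x))).prod
      (volume.withDensity (fun x => ENNReal.ofReal (f x))) {p : ℝ × ℝ | |p.1 - p.2| < h}
      ≤ ENNReal.ofReal (Cf * (2 * h)) := by
  set μ := volume.withDensity (fun x => ENNReal.ofReal (f x)) with hμ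
  rw [Measure.prod_apply (strip_measurable h)]
  have hslice : ∀ x : ℝ, Prod.mk x ⁻¹' {p : ℝ × ℝ | |p.1 - p.2| < h}
      = Set.Ioo (x - h) (x + h) := by
    intro x
    ext y
    simp only [Set.mem_preimage, Set.mem_setOf_eq, Set.mem_Ioo, abs_lt]
    constructor <;> intro ⟨h1, h2⟩ <;> constructor <;> linarith
  calc ∫⁻ x, μ (Prod.mk x ⁻¹' {p : ℝ × ℝ | |p.1 - p.2| < h}) ∂μ
      ≤ ∫⁻ _, ENNReal.ofReal (Cf * (2 * h)) ∂μ := by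
        apply lintegral_mono
        intro x
        dsimp only
        rw [hslice x]
        calc μ (Set.Ioo (x - h) (x + h))
            ≤ ENNReal.ofReal Cf * volume (Set.Ioo (x - h) (x + h)) :=
              dens_le hf hcf hcC hfb hf0 measurableSet_Ioo
          _ = ENNReal.ofReal (Cf * (2 * h)) := by
              rw [Real.volume_Ioo, show x + h - (x - h) = 2 * h by ring,
                ← ENNReal.ofReal_mul (by linarith)]
    _ = ENNReal.ofReal (Cf * (2 * h)) := by
        rw [lintegral_const, measure_univ, mul_one]

lemma strip_lower (hf : Measurable f) (hcf : 0 < cf)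
    (hfb : ∀ x ∈ Set.Ioo (0 : ℝ) 1, cf ≤ f x ∧ f x ≤ Cf)
    {h : ℝ} (hh : 0 < h) (hh2 : h ≤ 1 / 2) :
    ENNReal.ofReal (cf ^ 2 * h / 2)
      ≤ (volume.withDensity (fun x => ENNReal.ofReal (f x))).prod
        (volume.withDensity (fun x => ENNReal.ofReal (f x)))
        {p : ℝ × ℝ | |p.1 - p.2| < h} := by
  set μ := volume.withDensity (fun x => ENNReal.ofReal (f x)) with hμ
  set S' : Set (ℝ × ℝ) := {p | (0 < p.1 ∧ p.1 < 1 / 2) ∧ p.1 < p.2 ∧ p.2 < p.1 + h} with hS'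
  have hS'meas : MeasurableSet S' := by
    apply MeasurableSet.inter
    · exact (measurableSet_lt measurable_const measurable_fst).inter
        (measurableSet_lt measurable_fst measurable_const)
    · exact (measurableSet_lt measurable_fst measurable_snd).inter
        (measurableSet_lt measurable_snd (measurable_fst.add_const h))
  have hsub : S' ⊆ {p : ℝ × ℝ | |p.1 - p.2| < h} := by
    rintro ⟨x, y⟩ ⟨⟨_, _⟩, hxy, hyxh⟩
    simp only [Set.mem_setOf_eq, abs_lt]
    constructor <;> linarith
  refine le_trans ?_ (measure_mono hsub)
  rw [Measure.prod_apply hS'meas]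
  have hslice : ∀ x : ℝ, x ∈ Set.Ioo (0 : ℝ) (1 / 2) →
      Prod.mk x ⁻¹' S' = Set.Ioo x (x + h) := by
    intro x hx
    ext y
    simp only [hS', Set.mem_preimage, Set.mem_setOf_eq, Set.mem_Ioo]
    have := hx.1; have := hx.2
    constructor
    · rintro ⟨_, hy⟩; exact hy
    · intro hy; exact ⟨⟨hx.1, hx.2⟩, hy⟩
  have hbound : (Set.Ioo (0 : ℝ) (1 / 2)).indicator
      (fun _ => ENNReal.ofReal (cf * h)) ≤ fun x => μ (Prod.mk x ⁻¹' S') := by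
    intro x
    dsimp only
    by_cases hx : x ∈ Set.Ioo (0 : ℝ) (1 / 2)
    · rw [Set.indicator_of_mem hx, hslice x hx]
      have hsub1 : Set.Ioo x (x + h) ⊆ Set.Ioo (0 : ℝ) 1 := by
        intro y hy
        have := hx.1; have := hx.2; have := hy.1; have := hy.2
        constructor <;> [linarith; linarith]
      calc ENNReal.ofReal (cf * h)
          = ENNReal.ofReal cf * volume (Set.Ioo x (x + h)) := by
            rw [Real.volume_Ioo, show x + h - x = h by ring,
              ← ENNReal.ofReal_mul hcf.le]
        _ ≤ μ (Set.Ioo x (x + h)) := dens_ge hf hcf hfb measurableSet_Ioo hsub1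
    · rw [Set.indicator_of_notMem hx]
      exact zero_le
  calc ENNReal.ofReal (cf ^ 2 * h / 2)
      = ENNReal.ofReal (cf * h) * ENNReal.ofReal (cf * (1 / 2)) := by
        rw [← ENNReal.ofReal_mul (by positivity)]
        congr 1
        ring
    _ ≤ ENNReal.ofReal (cf * h) * μ (Set.Ioo (0 : ℝ) (1 / 2)) := by
        apply mul_le_mul_right
        calc ENNReal.ofReal (cf * (1 / 2))
            = ENNReal.ofReal cf * volume (Set.Ioo (0 : ℝ) (1 / 2)) := by
              rw [Real.volume_Ioo, show (1 : ℝ) / 2 - 0 = 1 / 2 by ring,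
                ← ENNReal.ofReal_mul hcf.le]
          _ ≤ μ (Set.Ioo (0 : ℝ) (1 / 2)) :=
              dens_ge hf hcf hfb measurableSet_Ioo
                (fun y hy => ⟨hy.1, by have := hy.2; linarith⟩)
    _ = ∫⁻ x, (Set.Ioo (0 : ℝ) (1 / 2)).indicator
          (fun _ => ENNReal.ofReal (cf * h)) x ∂μ := by
        rw [lintegral_indicator measurableSet_Ioo, setLIntegral_const, mul_comm]
    _ ≤ ∫⁻ x, μ (Prod.mk x ⁻¹' S') ∂μ := lintegral_mono hbound

lemma integral_ind {Ω : Type} [MeasurableSpace Ω] (P : Measure Ω) [IsFiniteMeasure P]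
    {p : Ω → Prop} [DecidablePred p] (hp : MeasurableSet {ω | p ω}) :
    Integrable (fun ω => if p ω then (1 : ℝ) else 0) P ∧
      ∫ ω, (if p ω then (1 : ℝ) else 0) ∂P = (P {ω | p ω}).toReal := by
  have hfun : (fun ω => if p ω then (1 : ℝ) else 0)
      = {ω | p ω}.indicator (fun _ => (1 : ℝ)) := by
    ext ω
    by_cases hω : p ω
    · rw [if_pos hω,
        Set.indicator_of_mem (show ω ∈ {ω | p ω} from hω) (fun _ => (1 : ℝ))]
    · rw [if_neg hω,
        Set.indicator_of_notMem (show ω ∉ {ω | p ω} from hω) (fun _ => (1 : ℝ))]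
  constructor
  · rw [hfun]
    exact (integrable_const (1 : ℝ)).indicator hp
  · rw [hfun]
    exact integral_indicator_one hp

lemma pair_measure_eq {Ω : Type} [MeasurableSpace Ω] (P : Measure Ω) [IsProbabilityMeasure P]
    {X Y : Ω → ℝ} (hX : Measurable X) (hY : Measurable Y)
    (hind : IndepFun X Y P) {S : Set (ℝ × ℝ)} (hS : MeasurableSet S) :
    P {ω | (X ω, Y ω) ∈ S} = ((P.map X).prod (P.map Y)) S := by
  rw [← (indepFun_iff_map_prod_eq_prod_map_map hX.aemeasurable hY.aemeasurable).mp hind,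
    Measure.map_apply (hX.prodMk hY) hS]
  rfl

end MeasureLemmas

/-- for fixed `m ≥ 2` and densities `f` on `(0,1)` bounded between `c_f` and
`C_f`, there are constants `0 < c₁ ≤ c₂` and `h₀ > 0` depending only on `m, c_f, C_f` such
that `c₁ n h ≤ E[Ñ_h] ≤ c₂ n h` for all `n ≥ 1` and `0 < h ≤ h₀`. -/
theorem statement0 (m : ℕ) (hm : 2 ≤ m) (cf Cf : ℝ) (hcf : 0 < cf) (hcC : cf ≤ Cf) :
    ∃ c₁ c₂ h₀ : ℝ, 0 < c₁ ∧ c₁ ≤ c₂ ∧ 0 < h₀ ∧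
      ∀ (f : ℝ → ℝ), Measurable f →
        (∀ x ∈ Set.Ioo (0 : ℝ) 1, cf ≤ f x ∧ f x ≤ Cf) →
        (∀ x, x ∉ Set.Ioo (0 : ℝ) 1 → f x = 0) →
        ∀ (n : ℕ), 1 ≤ n → ∀ (h : ℝ), 0 < h → h ≤ h₀ →
        ∀ (Ω : Type) (_ : MeasurableSpace Ω) (P : Measure Ω), IsProbabilityMeasure P →
        ∀ (T : Fin n → Fin m → Ω → ℝ),
          (∀ i j, Measurable (T i j)) →
          iIndepFun (m := fun _ : Fin n × Fin m => Real.measurableSpace)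
            (fun p ω => T p.1 p.2 ω) P →
          (∀ i j, Measure.map (T i j) P
              = volume.withDensity (fun x => ENNReal.ofReal (f x))) →
          c₁ * n * h ≤ ∫ ω, spacingCount n m (fun i k => T i k ω) h ∂P ∧
            ∫ ω, spacingCount n m (fun i k => T i k ω) h ∂P ≤ c₂ * n * h := by
  have hCf : 0 < Cf := lt_of_lt_of_le hcf hcC
  refine ⟨cf ^ 2 / 2, max (cf ^ 2 / 2) (2 * (m : ℝ) ^ 2 * Cf), 1 / 2, by positivity,
    le_max_left _ _, by norm_num, ?_⟩
  intro f hfmeas hfb hf0 n hn h hh hh2 Ω mΩ P hPprob T hT hind hmap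
  haveI := hPprob
  haveI hNn : NeZero n := ⟨by omega⟩
  haveI hNm : NeZero m := ⟨by omega⟩
  have h0m : 0 < m := by omega
  have h1m : 1 < m := by omega
  set μ := volume.withDensity (fun x => ENNReal.ofReal (f x)) with hμdef
  haveI hμP : IsProbabilityMeasure μ := by
    rw [← hmap 0 0]
    exact Measure.isProbabilityMeasure_map (hT 0 0).aemeasurable
  set S : Set (ℝ × ℝ) := {p | |p.1 - p.2| < h} with hSdef
  have hSmeas : MeasurableSet S := strip_measurable h
  -- per-pair probability
  have hpair : ∀ (i : Fin n) (a b : Fin m), a ≠ b →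
      P {ω | |T i a ω - T i b ω| < h} = (μ.prod μ) S := by
    intro i a b hab
    have hind2 : IndepFun (T i a) (T i b) P :=
      hind.indepFun (show ((i, a) : Fin n × Fin m) ≠ (i, b) by
        simp [Prod.ext_iff, hab])
    have hE : {ω | |T i a ω - T i b ω| < h} = {ω | (T i a ω, T i b ω) ∈ S} := rfl
    rw [hE, pair_measure_eq P (hT i a) (hT i b) hind2 hSmeas, hmap, hmap]
  haveI : IsProbabilityMeasure (μ.prod μ) := by infer_instance
  have hfin : (μ.prod μ) S ≠ ⊤ := measure_ne_top _ _
  have hup : ((μ.prod μ) S).toReal ≤ Cf * (2 * h) :=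
    ENNReal.toReal_le_of_le_ofReal (by positivity)
      (strip_upper hfmeas hcf hcC hfb hf0 hh hμP)
  have hlo : cf ^ 2 * h / 2 ≤ ((μ.prod μ) S).toReal := by
    calc cf ^ 2 * h / 2 = (ENNReal.ofReal (cf ^ 2 * h / 2)).toReal :=
          (ENNReal.toReal_ofReal (by positivity)).symm
      _ ≤ ((μ.prod μ) S).toReal :=
          ENNReal.toReal_mono hfin (strip_lower hfmeas hcf hfb hh hh2)
  -- measurable sets for spacing indicators
  have hvmeas : ∀ i : Fin n, Measurable fun ω k => T i k ω :=
    fun i => measurable_pi_lambda _ (fun k => hT i k)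
  have hmeasSp : ∀ (i : Fin n) (j : ℕ), MeasurableSet
      {ω | sortedVal (fun k => T i k ω) (j + 1) - sortedVal (fun k => T i k ω) j < h} := by
    intro i j
    exact measurableSet_lt
      (((measurable_sortedVal (j + 1)).comp (hvmeas i)).sub
        ((measurable_sortedVal j).comp (hvmeas i))) measurable_const
  have hIntSp : Integrable (fun ω => spacingCount n m (fun i k => T i k ω) h) P := by
    have hE : (fun ω => spacingCount n m (fun i k => T i k ω) h)
        = fun ω => ∑ i : Fin n, ∑ j ∈ Finset.range (m - 1),
            if sortedVal (fun k => T i k ω) (j + 1)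
              - sortedVal (fun k => T i k ω) j < h then (1 : ℝ) else 0 := rfl
    rw [hE]
    exact integrable_finset_sum _ fun i _ =>
      integrable_finset_sum _ fun j _ => (integral_ind P (hmeasSp i j)).1
  constructor
  · -- lower bound
    have hmeasL : ∀ i : Fin n, MeasurableSet
        {ω | |T i ⟨0, h0m⟩ ω - T i ⟨1, h1m⟩ ω| < h} := fun i =>
      measurableSet_lt (((hT i ⟨0, h0m⟩).sub (hT i ⟨1, h1m⟩)).abs) measurable_const
    have hLle : ∀ ω, (∑ i : Fin n,
        if |T i ⟨0, h0m⟩ ω - T i ⟨1, h1m⟩ ω| < h then (1 : ℝ) else 0)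
        ≤ spacingCount n m (fun i k => T i k ω) h := by
      intro ω
      unfold spacingCount
      apply Finset.sum_le_sum
      intro i _
      by_cases hc : |T i ⟨0, h0m⟩ ω - T i ⟨1, h1m⟩ ω| < h
      · rw [if_pos hc]
        obtain ⟨j, hjmem, hjlt⟩ := exists_spacing_lt hm (fun k => T i k ω) hc
        calc (1 : ℝ) = if sortedVal (fun k => T i k ω) (j + 1)
              - sortedVal (fun k => T i k ω) j < h then (1 : ℝ) else 0 := (if_pos hjlt).symm
          _ ≤ _ := Finset.single_le_sum
              (f := fun j => if sortedVal (fun k => T i k ω) (j + 1)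
                - sortedVal (fun k => T i k ω) j < h then (1 : ℝ) else 0)
              (fun j _ => by split_ifs <;> norm_num) hjmem
      · rw [if_neg hc]
        exact Finset.sum_nonneg fun j _ => by split_ifs <;> norm_num
    have hIntL : Integrable (fun ω => ∑ i : Fin n,
        if |T i ⟨0, h0m⟩ ω - T i ⟨1, h1m⟩ ω| < h then (1 : ℝ) else 0) P :=
      integrable_finset_sum _ fun i _ => (integral_ind P (hmeasL i)).1
    have hL : ∫ ω, (∑ i : Fin n,
        if |T i ⟨0, h0m⟩ ω - T i ⟨1, h1m⟩ ω| < h then (1 : ℝ) else 0) ∂P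
        = n * ((μ.prod μ) S).toReal := by
      rw [integral_finset_sum _ fun i _ => (integral_ind P (hmeasL i)).1]
      have : ∀ i : Fin n, ∫ ω,
          (if |T i ⟨0, h0m⟩ ω - T i ⟨1, h1m⟩ ω| < h then (1 : ℝ) else 0) ∂P
          = ((μ.prod μ) S).toReal := by
        intro i
        rw [(integral_ind P (hmeasL i)).2,
          hpair i ⟨0, h0m⟩ ⟨1, h1m⟩ (by
            intro hE
            have := congrArg Fin.val hE
            simp at this)]
      rw [Finset.sum_congr rfl fun i _ => this i, Finset.sum_const, Finset.card_univ,
        Fintype.card_fin, nsmul_eq_mul]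
    calc cf ^ 2 / 2 * n * h = n * (cf ^ 2 * h / 2) := by ring
      _ ≤ n * ((μ.prod μ) S).toReal := by
          apply mul_le_mul_of_nonneg_left hlo (by positivity)
      _ = ∫ ω, (∑ i : Fin n,
            if |T i ⟨0, h0m⟩ ω - T i ⟨1, h1m⟩ ω| < h then (1 : ℝ) else 0) ∂P := hL.symm
      _ ≤ ∫ ω, spacingCount n m (fun i k => T i k ω) h ∂P :=
          integral_mono hIntL hIntSp hLle
  · -- upper bound
    have hmeasU : ∀ (i : Fin n) (p : Fin m × Fin m), MeasurableSet
        {ω | p.1 ≠ p.2 ∧ |T i p.1 ω - T i p.2 ω| < h} := by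
      intro i p
      by_cases hp : p.1 = p.2
      · have hE : {ω | p.1 ≠ p.2 ∧ |T i p.1 ω - T i p.2 ω| < h} = ∅ := by
          ext ω; simp [hp]
        rw [hE]; exact MeasurableSet.empty
      · have hE : {ω | p.1 ≠ p.2 ∧ |T i p.1 ω - T i p.2 ω| < h}
            = {ω | |T i p.1 ω - T i p.2 ω| < h} := by
          ext ω; simp [hp]
        rw [hE]
        exact measurableSet_lt (((hT i p.1).sub (hT i p.2)).abs) measurable_const
    have hUle : ∀ ω, spacingCount n m (fun i k => T i k ω) h
        ≤ ∑ i : Fin n, ∑ p : Fin m × Fin m,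
            if p.1 ≠ p.2 ∧ |T i p.1 ω - T i p.2 ω| < h then (1 : ℝ) else 0 := by
      intro ω
      unfold spacingCount
      exact Finset.sum_le_sum fun i _ => sum_spacing_le hm (fun k => T i k ω) h
    have hIntU : Integrable (fun ω => ∑ i : Fin n, ∑ p : Fin m × Fin m,
        if p.1 ≠ p.2 ∧ |T i p.1 ω - T i p.2 ω| < h then (1 : ℝ) else 0) P :=
      integrable_finset_sum _ fun i _ =>
        integrable_finset_sum _ fun p _ => (integral_ind P (hmeasU i p)).1
    have hUterm : ∀ (i : Fin n) (p : Fin m × Fin m),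
        ∫ ω, (if p.1 ≠ p.2 ∧ |T i p.1 ω - T i p.2 ω| < h then (1 : ℝ) else 0) ∂P
          ≤ Cf * (2 * h) := by
      intro i p
      rw [(integral_ind P (hmeasU i p)).2]
      by_cases hp : p.1 = p.2
      · have hE : {ω | p.1 ≠ p.2 ∧ |T i p.1 ω - T i p.2 ω| < h} = ∅ := by
          ext ω; simp [hp]
        rw [hE]
        simp only [measure_empty, ENNReal.toReal_zero]
        positivity
      · have hE : {ω | p.1 ≠ p.2 ∧ |T i p.1 ω - T i p.2 ω| < h}
            = {ω | |T i p.1 ω - T i p.2 ω| < h} := by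
          ext ω; simp [hp]
        rw [hE, hpair i p.1 p.2 hp]
        exact hup
    calc ∫ ω, spacingCount n m (fun i k => T i k ω) h ∂P
        ≤ ∫ ω, (∑ i : Fin n, ∑ p : Fin m × Fin m,
            if p.1 ≠ p.2 ∧ |T i p.1 ω - T i p.2 ω| < h then (1 : ℝ) else 0) ∂P :=
          integral_mono hIntSp hIntU hUle
      _ = ∑ i : Fin n, ∑ p : Fin m × Fin m, ∫ ω,
            (if p.1 ≠ p.2 ∧ |T i p.1 ω - T i p.2 ω| < h then (1 : ℝ) else 0) ∂P := by
          rw [integral_finset_sum _ fun i _ =>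
            integrable_finset_sum _ fun p _ => (integral_ind P (hmeasU i p)).1]
          exact Finset.sum_congr rfl fun i _ =>
            integral_finset_sum _ fun p _ => (integral_ind P (hmeasU i p)).1
      _ ≤ ∑ _i : Fin n, ∑ _p : Fin m × Fin m, Cf * (2 * h) :=
          Finset.sum_le_sum fun i _ => Finset.sum_le_sum fun p _ => hUterm i p
      _ = n * ((m : ℝ) * m * (Cf * (2 * h))) := by
          simp [Finset.sum_const, Finset.card_univ, mul_assoc, mul_comm, mul_left_comm]
      _ = 2 * (m : ℝ) ^ 2 * Cf * n * h := by ring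
      _ ≤ max (cf ^ 2 / 2) (2 * (m : ℝ) ^ 2 * Cf) * n * h := by
          apply mul_le_mul_of_nonneg_right _ hh.le
          apply mul_le_mul_of_nonneg_right (le_max_right _ _) (by positivity)
end

section
/- Let f be a probability density on (0,1) satisfying 0 < c_f ≤ f(t) ≤ C_f for all t ∈ (0,1). There exist constants 0 < c₁ ≤ c₂ < ∞ and δ₀ > 0, depending only on c_f and C_f, such that for every n ≥ 1, every integer m ≥ 2, and every h > 0 with m·h ≤ δ₀, if (t_{i,j}), i = 1,…,n, j = 1,…,m, are i.i.d. with density f and Ñ_h = #{(i,j) : 1 ≤ i ≤ n, 1 ≤ j ≤ m−1, t_{i,(j+1)} − t_{i,(j)} < h}, then c₁·n·m²·h ≤ E[Ñ_h] ≤ c₂·n·m²·h. -/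
open MeasureTheory ProbabilityTheory Filter

lemma rowEq {m : ℕ} (hm : 2 ≤ m) (v : Fin m → ℝ) (hv : Function.Injective v) (h : ℝ) :
    ∑ j ∈ Finset.range (m - 1),
      (if sortedVal v (j + 1) - sortedVal v j < h then (1:ℝ) else 0)
    = ∑ k : Fin m, (if ∃ l, v k < v l ∧ v l < v k + h then (1:ℝ) else 0) := by
  classical
  set σ := Tuple.sort v with hσ
  have hmono : Monotone (v ∘ σ) := Tuple.monotone_sort v
  have hsm : StrictMono (v ∘ σ) :=
    hmono.strictMono_of_injective (hv.comp σ.injective)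
  have hsv : ∀ (j : ℕ) (hj : j < m), sortedVal v j = v (σ ⟨j, hj⟩) := by
    intro j hj; simp [sortedVal, hj, hσ]
  have hre : ∑ k : Fin m, (if ∃ l, v k < v l ∧ v l < v k + h then (1:ℝ) else 0)
      = ∑ j : Fin m, (if ∃ l, v (σ j) < v l ∧ v l < v (σ j) + h then (1:ℝ) else 0) :=
    (Equiv.sum_comp σ _).symm
  have hre2 : ∑ j : Fin m, (if ∃ l, v (σ j) < v l ∧ v l < v (σ j) + h then (1:ℝ) else 0)
      = ∑ j ∈ Finset.range m,
          (if ∃ l, sortedVal v j < v l ∧ v l < sortedVal v j + h then (1:ℝ) else 0) := by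
    rw [← Fin.sum_univ_eq_sum_range
      (fun j => if ∃ l, sortedVal v j < v l ∧ v l < sortedVal v j + h then (1:ℝ) else 0)]
    apply Finset.sum_congr rfl
    intro j _
    rw [hsv j.1 j.isLt]
  rw [hre, hre2]
  have hm1 : m - 1 + 1 = m := by omega
  rw [show (∑ j ∈ Finset.range m,
      (if ∃ l, sortedVal v j < v l ∧ v l < sortedVal v j + h then (1:ℝ) else 0))
      = (∑ j ∈ Finset.range (m-1),
      (if ∃ l, sortedVal v j < v l ∧ v l < sortedVal v j + h then (1:ℝ) else 0))
      + (if ∃ l, sortedVal v (m-1) < v l ∧ v l < sortedVal v (m-1) + h then (1:ℝ) else 0)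
      from by rw [← Finset.sum_range_succ, hm1]]
  have hlast : ¬ ∃ l, sortedVal v (m-1) < v l ∧ v l < sortedVal v (m-1) + h := by
    rintro ⟨l, hl1, -⟩
    rw [hsv (m-1) (by omega)] at hl1
    have hvl : v l = (v ∘ σ) (σ.symm l) := by simp
    rw [hvl] at hl1
    have hlt := hsm.lt_iff_lt.mp hl1
    have : (σ.symm l : ℕ) < m := (σ.symm l).isLt
    have : (⟨m-1, by omega⟩ : Fin m) < σ.symm l := hlt
    rw [Fin.lt_def] at this
    simp at this
    omega
  rw [if_neg hlast, add_zero]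
  apply Finset.sum_congr rfl
  intro j hj
  rw [Finset.mem_range] at hj
  have hj1 : j + 1 < m := by omega
  have hjm : j < m := by omega
  congr 1
  rw [hsv j hjm, hsv (j+1) hj1]
  apply propext
  constructor
  · intro hgap
    exact ⟨σ ⟨j+1, hj1⟩, hsm (by rw [Fin.lt_def]; simp), by linarith⟩
  · rintro ⟨l, hl1, hl2⟩
    have hvl : v l = (v ∘ σ) (σ.symm l) := by simp
    rw [hvl] at hl1 hl2
    have hlt : (⟨j, hjm⟩ : Fin m) < σ.symm l := hsm.lt_iff_lt.mp hl1
    have hle : (⟨j+1, hj1⟩ : Fin m) ≤ σ.symm l := by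
      rw [Fin.lt_def] at hlt; rw [Fin.le_def]; simpa using hlt
    have := hmono hle
    simp only [Function.comp_apply] at this hl2
    linarith

lemma bonf_pointwise {m : ℕ} (B : Fin m → Prop) [DecidablePred B] :
    (∑ l : Fin m, (if B l then (1:ℝ) else 0))
      - (1/2) * ∑ p ∈ Finset.univ.offDiag, (if B p.1 ∧ B p.2 then (1:ℝ) else 0)
    ≤ (if ∃ l, B l then (1:ℝ) else 0) := by
  classical
  set s : Finset (Fin m) := Finset.univ.filter B with hs
  have h1 : (∑ l : Fin m, (if B l then (1:ℝ) else 0)) = (s.card : ℝ) := by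
    simp [hs, Finset.sum_boole]
  have hset : (Finset.univ.offDiag.filter (fun p : Fin m × Fin m => B p.1 ∧ B p.2)) = s.offDiag := by
    ext ⟨a, b⟩
    simp [Finset.mem_offDiag, hs]
    tauto
  have h2 : (∑ p ∈ Finset.univ.offDiag, (if B p.1 ∧ B p.2 then (1:ℝ) else 0))
      = ((s.card * s.card - s.card : ℕ) : ℝ) := by
    rw [Finset.sum_boole, hset, Finset.offDiag_card]
  rw [h1, h2]
  by_cases hex : ∃ l, B l
  · rw [if_pos hex]
    obtain ⟨l, hl⟩ := hex
    have hr : 1 ≤ s.card := Finset.card_pos.mpr ⟨l, by simp [hs, hl]⟩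
    set r := s.card
    have hle : r ≤ r * r := Nat.le_mul_of_pos_left r (show 0 < r by omega)
    have hcast : ((r * r - r : ℕ) : ℝ) = (r:ℝ) * r - r := by
      push_cast [Nat.cast_sub hle]
      ring
    rw [hcast]
    rcases Nat.lt_or_ge r 2 with h2' | h2'
    · have : r = 1 := by omega
      simp [this]
    · have : (2:ℝ) ≤ r := by exact_mod_cast h2'
      nlinarith
  · rw [if_neg hex]
    have : s = ∅ := by
      rw [hs]; ext l; simp; intro h; exact hex ⟨l, h⟩
    simp [this]

lemma hS_meas (h : ℝ) : MeasurableSet {p : ℝ × ℝ | p.1 < p.2 ∧ p.2 < p.1 + h} :=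
  (measurableSet_lt measurable_fst measurable_snd).inter
    (measurableSet_lt measurable_snd (measurable_fst.add_const h))

lemma hS3_meas (h : ℝ) : MeasurableSet {q : (ℝ × ℝ) × ℝ |
    (q.1.1 < q.1.2 ∧ q.1.2 < q.1.1 + h) ∧ (q.1.1 < q.2 ∧ q.2 < q.1.1 + h)} := by
  apply MeasurableSet.inter
  · exact (measurableSet_lt (measurable_fst.comp measurable_fst)
      (measurable_snd.comp measurable_fst)).inter
      (measurableSet_lt (measurable_snd.comp measurable_fst)
        ((measurable_fst.comp measurable_fst).add_const h))
  · exact (measurableSet_lt (measurable_fst.comp measurable_fst) measurable_snd).inter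
      (measurableSet_lt measurable_snd ((measurable_fst.comp measurable_fst).add_const h))

lemma q_upper {f : ℝ → ℝ} {Cf h : ℝ} (hC0 : 0 ≤ Cf) (hC : ∀ x, f x ≤ Cf) (x : ℝ) :
    (volume.withDensity (fun x => ENNReal.ofReal (f x))) (Set.Ioo x (x + h))
      ≤ ENNReal.ofReal (Cf * h) := by
  rw [withDensity_apply _ measurableSet_Ioo]
  calc ∫⁻ a in Set.Ioo x (x+h), ENNReal.ofReal (f a)
      ≤ ∫⁻ _ in Set.Ioo x (x+h), ENNReal.ofReal Cf :=
        setLIntegral_mono measurable_const (fun a _ => ENNReal.ofReal_le_ofReal (hC a))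
    _ = ENNReal.ofReal Cf * volume (Set.Ioo x (x+h)) := setLIntegral_const _ _
    _ = ENNReal.ofReal (Cf * h) := by
        rw [Real.volume_Ioo, ← ENNReal.ofReal_mul hC0, add_sub_cancel_left]

lemma q_lower {f : ℝ → ℝ} {cf h : ℝ} (hc0 : 0 ≤ cf) (hf : Measurable f)
    (hc : ∀ x ∈ Set.Ioo (0:ℝ) 1, cf ≤ f x)
    (hh2 : h ≤ 1/2) {x : ℝ} (hx : x ∈ Set.Ioo (0:ℝ) (1/2)) :
    ENNReal.ofReal (cf * h)
      ≤ (volume.withDensity (fun x => ENNReal.ofReal (f x))) (Set.Ioo x (x + h)) := by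
  rw [withDensity_apply _ measurableSet_Ioo]
  obtain ⟨hx0, hx1⟩ := hx
  have hsub : Set.Ioo x (x+h) ⊆ Set.Ioo (0:ℝ) 1 := by
    intro a ⟨h1, h2⟩; exact ⟨lt_trans hx0 h1, by linarith⟩
  calc ENNReal.ofReal (cf * h)
      = ENNReal.ofReal cf * volume (Set.Ioo x (x+h)) := by
        rw [Real.volume_Ioo, ← ENNReal.ofReal_mul hc0, add_sub_cancel_left]
    _ = ∫⁻ _ in Set.Ioo x (x+h), ENNReal.ofReal cf := (setLIntegral_const _ _).symm
    _ ≤ ∫⁻ a in Set.Ioo x (x+h), ENNReal.ofReal (f a) :=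
        setLIntegral_mono (ENNReal.measurable_ofReal.comp hf)
          (fun a ha => ENNReal.ofReal_le_ofReal (hc a (hsub ha)))

lemma half_lower {f : ℝ → ℝ} {cf : ℝ} (hc0 : 0 ≤ cf) (hf : Measurable f)
    (hc : ∀ x ∈ Set.Ioo (0:ℝ) 1, cf ≤ f x) :
    ENNReal.ofReal (cf * (1/2))
      ≤ (volume.withDensity (fun x => ENNReal.ofReal (f x))) (Set.Ioo (0:ℝ) (1/2)) := by
  rw [withDensity_apply _ measurableSet_Ioo]
  calc ENNReal.ofReal (cf * (1/2))
      = ENNReal.ofReal cf * volume (Set.Ioo (0:ℝ) (1/2)) := by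
        rw [Real.volume_Ioo, ← ENNReal.ofReal_mul hc0]
        norm_num
    _ = ∫⁻ _ in Set.Ioo (0:ℝ) (1/2), ENNReal.ofReal cf := (setLIntegral_const _ _).symm
    _ ≤ ∫⁻ a in Set.Ioo (0:ℝ) (1/2), ENNReal.ofReal (f a) :=
        setLIntegral_mono (ENNReal.measurable_ofReal.comp hf)
          (fun a ha => ENNReal.ofReal_le_ofReal (hc a ⟨ha.1, by linarith [ha.2]⟩))

lemma prod_S_eq (μ : Measure ℝ) [SFinite μ] (h : ℝ) :
    (μ.prod μ) {p : ℝ × ℝ | p.1 < p.2 ∧ p.2 < p.1 + h}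
      = ∫⁻ x, μ (Set.Ioo x (x + h)) ∂μ := by
  rw [Measure.prod_apply (hS_meas h)]
  rfl

lemma eq_null {Ω : Type} [MeasurableSpace Ω] (P : Measure Ω) [IsProbabilityMeasure P]
    {X Y : Ω → ℝ} (hX : Measurable X) (hY : Measurable Y) (hind : IndepFun X Y P)
    {μ : Measure ℝ} [SFinite μ] (hXl : P.map X = μ) (hYl : P.map Y = μ)
    (hatom : ∀ x : ℝ, μ {x} = 0) :
    P {ω | X ω = Y ω} = 0 := by
  have hD : MeasurableSet {p : ℝ × ℝ | p.1 = p.2} :=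
    measurableSet_eq_fun measurable_fst measurable_snd
  have hmap : P.map (fun ω => (X ω, Y ω)) = μ.prod μ := by
    rw [(indepFun_iff_map_prod_eq_prod_map_map hX.aemeasurable hY.aemeasurable).mp hind,
      hXl, hYl]
  have heq : P {ω | X ω = Y ω} = (μ.prod μ) {p : ℝ × ℝ | p.1 = p.2} := by
    rw [← hmap, Measure.map_apply (hX.prodMk hY) hD]
    rfl
  rw [heq, Measure.prod_apply hD]
  have hpre : ∀ x : ℝ, μ (Prod.mk x ⁻¹' {p : ℝ × ℝ | p.1 = p.2}) = 0 := by
    intro x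
    have : Prod.mk x ⁻¹' {p : ℝ × ℝ | p.1 = p.2} = {x} := by
      ext y; simp [eq_comm]
    rw [this]; exact hatom x
  simp [hpre]
  simp [hatom]

set_option maxHeartbeats 2000000 in
/-- there are constants `0 < c₁ ≤ c₂` and `δ₀ > 0` depending only on
`c_f, C_f` such that for every `n ≥ 1`, `m ≥ 2` and `h > 0` with `m·h ≤ δ₀`,
`c₁·n·m²·h ≤ E[Ñ_h] ≤ c₂·n·m²·h`. -/
theorem statement1 (cf Cf : ℝ) (hcf : 0 < cf) (hcC : cf ≤ Cf) :
    ∃ c₁ c₂ δ₀ : ℝ, 0 < c₁ ∧ c₁ ≤ c₂ ∧ 0 < δ₀ ∧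
      ∀ (f : ℝ → ℝ), Measurable f →
        (∀ x ∈ Set.Ioo (0 : ℝ) 1, cf ≤ f x ∧ f x ≤ Cf) →
        (∀ x, x ∉ Set.Ioo (0 : ℝ) 1 → f x = 0) →
        ∀ (n : ℕ), 1 ≤ n → ∀ (m : ℕ), 2 ≤ m → ∀ (h : ℝ), 0 < h → (m : ℝ) * h ≤ δ₀ →
        ∀ (Ω : Type) (_ : MeasurableSpace Ω) (P : Measure Ω), IsProbabilityMeasure P →
        ∀ (T : Fin n → Fin m → Ω → ℝ),
          (∀ i j, Measurable (T i j)) →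
          iIndepFun
            (fun (p : Fin n × Fin m) ω => T p.1 p.2 ω) P →
          (∀ i j, Measure.map (T i j) P
              = volume.withDensity (fun x => ENNReal.ofReal (f x))) →
          c₁ * n * m ^ 2 * h ≤ ∫ ω, spacingCount n m (fun i k => T i k ω) h ∂P ∧
            ∫ ω, spacingCount n m (fun i k => T i k ω) h ∂P ≤ c₂ * n * m ^ 2 * h := by
  classical
  have hCf0 : 0 < Cf := lt_of_lt_of_le hcf hcC
  refine ⟨min (cf^2/8) Cf, Cf, min (1/2) (cf^2/(4*Cf^2)),
    lt_min (by positivity) hCf0, min_le_right _ _,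
    lt_min (by norm_num) (by positivity), ?_⟩
  intro f hfmeas hbound hsupp n hn m hm h hh hδ Ω mΩ P hP T hT hIndep hLaw
  set μ : Measure ℝ := volume.withDensity (fun x => ENNReal.ofReal (f x)) with hμdef
  have hδ1 : (m:ℝ)*h ≤ 1/2 := le_trans hδ (min_le_left _ _)
  have hδ2 : (m:ℝ)*h ≤ cf^2/(4*Cf^2) := le_trans hδ (min_le_right _ _)
  have hm2 : (2:ℝ) ≤ (m:ℝ) := by exact_mod_cast hm
  have hh2 : h ≤ 1/2 := by nlinarith
  haveI hPμ : IsProbabilityMeasure μ := by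
    rw [← hLaw ⟨0, by omega⟩ ⟨0, by omega⟩]
    exact Measure.isProbabilityMeasure_map (hT _ _).aemeasurable
  have hatom : ∀ x : ℝ, μ {x} = 0 := fun x =>
    (withDensity_absolutelyContinuous volume _) (Real.volume_singleton)
  have hfC : ∀ x, f x ≤ Cf := by
    intro x
    by_cases hx : x ∈ Set.Ioo (0:ℝ) 1
    · exact (hbound x hx).2
    · rw [hsupp x hx]; exact hCf0.le
  -- the basic sets
  set Bs : Fin n → Fin m → Fin m → Set Ω :=
    fun i k l => {ω | T i k ω < T i l ω ∧ T i l ω < T i k ω + h} with hBsdef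
  have hBsm : ∀ i k l, MeasurableSet (Bs i k l) := fun i k l =>
    (measurableSet_lt (hT i k) (hT i l)).inter
      (measurableSet_lt (hT i l) ((hT i k).add_const h))
  set A : Fin n → Fin m → Set Ω := fun i k => ⋃ l, Bs i k l with hAdef
  have hAm : ∀ i k, MeasurableSet (A i k) := fun i k => MeasurableSet.iUnion (hBsm i k)
  set qI : ENNReal := ∫⁻ x, μ (Set.Ioo x (x+h)) ∂μ with hqIdef
  -- law of pairs
  have hmap2 : ∀ (i : Fin n) (k l : Fin m), k ≠ l →
      P.map (fun ω => (T i k ω, T i l ω)) = μ.prod μ := by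
    intro i k l hkl
    have hind : IndepFun (T i k) (T i l) P :=
      hIndep.indepFun (show ((i,k) : Fin n × Fin m) ≠ (i,l) by simp [Prod.ext_iff, hkl])
    rw [(indepFun_iff_map_prod_eq_prod_map_map (hT i k).aemeasurable
      (hT i l).aemeasurable).mp hind, hLaw, hLaw]
  have hPB : ∀ (i : Fin n) (k l : Fin m), k ≠ l → P (Bs i k l) = qI := by
    intro i k l hkl
    have hpre : Bs i k l = (fun ω => (T i k ω, T i l ω)) ⁻¹'
        {p : ℝ × ℝ | p.1 < p.2 ∧ p.2 < p.1 + h} := rfl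
    rw [hpre, ← Measure.map_apply ((hT i k).prodMk (hT i l)) (hS_meas h),
      hmap2 i k l hkl, prod_S_eq]
  -- bounds on qI
  have hqub : qI ≤ ENNReal.ofReal (Cf*h) := by
    calc qI ≤ ∫⁻ _, ENNReal.ofReal (Cf*h) ∂μ :=
          lintegral_mono (fun x => q_upper hCf0.le hfC x)
      _ = ENNReal.ofReal (Cf*h) := by simp
  have hqIne : qI ≠ ⊤ := (lt_of_le_of_lt hqub ENNReal.ofReal_lt_top).ne
  have hqlb : ENNReal.ofReal ((cf*h)*(cf*(1/2))) ≤ qI := by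
    calc ENNReal.ofReal ((cf*h)*(cf*(1/2)))
        = ENNReal.ofReal (cf*h) * ENNReal.ofReal (cf*(1/2)) :=
          ENNReal.ofReal_mul (by positivity)
      _ ≤ ENNReal.ofReal (cf*h) * μ (Set.Ioo (0:ℝ) (1/2)) :=
          mul_le_mul_right (half_lower hcf.le hfmeas (fun x hx => (hbound x hx).1)) _
      _ = ∫⁻ x, (Set.Ioo (0:ℝ) (1/2)).indicator (fun _ => ENNReal.ofReal (cf*h)) x ∂μ := by
          rw [lintegral_indicator measurableSet_Ioo, setLIntegral_const]
      _ ≤ qI := by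
          apply lintegral_mono
          intro x
          by_cases hx : x ∈ Set.Ioo (0:ℝ) (1/2)
          · rw [Set.indicator_of_mem hx]
            exact q_lower hcf.le hfmeas (fun y hy => (hbound y hy).1) hh2 hx
          · rw [Set.indicator_of_notMem hx]; exact zero_le
  have hq1 : (cf*h)*(cf*(1/2)) ≤ qI.toReal :=
    (ENNReal.ofReal_le_iff_le_toReal hqIne).mp hqlb
  have hq2 : qI.toReal ≤ Cf*h := ENNReal.toReal_le_of_le_ofReal (by positivity) hqub
  -- triple bound
  have hPBB : ∀ (i : Fin n) (k l l' : Fin m), k ≠ l → k ≠ l' → l ≠ l' →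
      P (Bs i k l ∩ Bs i k l') ≤ ENNReal.ofReal ((Cf*h)*(Cf*h)) := by
    intro i k l l' hkl hkl' hll'
    have hindp : IndepFun (fun ω => (T i k ω, T i l ω)) (T i l') P :=
      hIndep.indepFun_prodMk (fun p => hT p.1 p.2) (i,k) (i,l) (i,l')
        (by simp [Prod.ext_iff, hkl']) (by simp [Prod.ext_iff, hll'])
    have hmap3 : P.map (fun ω => ((T i k ω, T i l ω), T i l' ω)) = (μ.prod μ).prod μ := by
      rw [(indepFun_iff_map_prod_eq_prod_map_map
        (((hT i k).prodMk (hT i l)).aemeasurable) (hT i l').aemeasurable).mp hindp,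
        hmap2 i k l hkl, hLaw]
    have hpre : Bs i k l ∩ Bs i k l' = (fun ω => ((T i k ω, T i l ω), T i l' ω)) ⁻¹'
        {q : (ℝ × ℝ) × ℝ | (q.1.1 < q.1.2 ∧ q.1.2 < q.1.1 + h) ∧
          (q.1.1 < q.2 ∧ q.2 < q.1.1 + h)} := rfl
    rw [hpre, ← Measure.map_apply (((hT i k).prodMk (hT i l)).prodMk (hT i l'))
      (hS3_meas h), hmap3]
    rw [Measure.prod_apply (hS3_meas h)]
    calc ∫⁻ p, μ (Prod.mk p ⁻¹' {q : (ℝ × ℝ) × ℝ | (q.1.1 < q.1.2 ∧ q.1.2 < q.1.1 + h) ∧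
            (q.1.1 < q.2 ∧ q.2 < q.1.1 + h)}) ∂(μ.prod μ)
        ≤ ∫⁻ p, ({p : ℝ × ℝ | p.1 < p.2 ∧ p.2 < p.1 + h}).indicator
            (fun _ => ENNReal.ofReal (Cf*h)) p ∂(μ.prod μ) := by
          apply lintegral_mono
          intro p
          dsimp only
          by_cases hp : p ∈ {p : ℝ × ℝ | p.1 < p.2 ∧ p.2 < p.1 + h}
          · rw [Set.indicator_of_mem hp]
            have hps : Prod.mk p ⁻¹' {q : (ℝ × ℝ) × ℝ | (q.1.1 < q.1.2 ∧ q.1.2 < q.1.1 + h) ∧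
                (q.1.1 < q.2 ∧ q.2 < q.1.1 + h)} = Set.Ioo p.1 (p.1 + h) := by
              ext z
              simp only [Set.mem_preimage, Set.mem_setOf_eq, Set.mem_Ioo]
              exact ⟨fun hz => hz.2, fun hz => ⟨hp, hz⟩⟩
            rw [hps]
            exact q_upper hCf0.le hfC p.1
          · have hps : Prod.mk p ⁻¹' {q : (ℝ × ℝ) × ℝ | (q.1.1 < q.1.2 ∧ q.1.2 < q.1.1 + h) ∧
                (q.1.1 < q.2 ∧ q.2 < q.1.1 + h)} = ∅ := by
              ext z
              simp only [Set.mem_preimage, Set.mem_setOf_eq, Set.mem_empty_iff_false,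
                iff_false]
              intro hz
              exact hp hz.1
            rw [hps, Set.indicator_of_notMem hp]
            simp
      _ = ENNReal.ofReal (Cf*h) * (μ.prod μ) {p : ℝ × ℝ | p.1 < p.2 ∧ p.2 < p.1 + h} := by
          rw [lintegral_indicator (hS_meas h), setLIntegral_const]
      _ ≤ ENNReal.ofReal (Cf*h) * ENNReal.ofReal (Cf*h) := by
          rw [prod_S_eq μ h]
          exact mul_le_mul_right hqub _
      _ = ENNReal.ofReal ((Cf*h)*(Cf*h)) := (ENNReal.ofReal_mul (by positivity)).symm
  -- diagonal events are null
  have hBkk : ∀ i k, Bs i k k = ∅ := by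
    intro i k
    ext ω
    simp [hBsdef, lt_irrefl]
  have hns : P {ω | ¬ ∀ i, Function.Injective (fun k => T i k ω)} = 0 := by
    have hsub : {ω | ¬ ∀ i, Function.Injective (fun k => T i k ω)} ⊆
        ⋃ i, ⋃ k, ⋃ l, ⋃ (_ : k ≠ l), {ω | T i k ω = T i l ω} := by
      intro ω hω
      obtain ⟨i, hi⟩ := not_forall.mp hω
      rw [Function.not_injective_iff] at hi
      obtain ⟨k, l, hkl, hne⟩ := hi
      exact Set.mem_iUnion.mpr ⟨i, Set.mem_iUnion.mpr ⟨k, Set.mem_iUnion.mpr ⟨l,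
        Set.mem_iUnion.mpr ⟨hne, hkl⟩⟩⟩⟩
    refine measure_mono_null hsub ?_
    refine measure_iUnion_null fun i => measure_iUnion_null fun k =>
      measure_iUnion_null fun l => measure_iUnion_null fun hkl => ?_
    exact eq_null P (hT i k) (hT i l)
      (hIndep.indepFun (show ((i,k) : Fin n × Fin m) ≠ (i,l) by simp [Prod.ext_iff, hkl]))
      (hLaw i k) (hLaw i l) hatom
  -- expectation as sum of probabilities
  have hint : ∀ i k, Integrable ((A i k).indicator (fun _ => (1:ℝ))) P :=
    fun i k => (integrable_const 1).indicator (hAm i k)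
  have hEG : ∫ ω, spacingCount n m (fun i k => T i k ω) h ∂P
      = ∑ i : Fin n, ∑ k : Fin m, (P (A i k)).toReal := by
    have hae : (fun ω => spacingCount n m (fun i k => T i k ω) h)
        =ᵐ[P] (fun ω => ∑ i : Fin n, ∑ k : Fin m, (A i k).indicator (fun _ => (1:ℝ)) ω) := by
      have : ∀ᵐ ω ∂P, ∀ i, Function.Injective (fun k => T i k ω) := by
        rw [ae_iff]
        exact hns
      filter_upwards [this] with ω hω
      unfold spacingCount
      refine Finset.sum_congr rfl fun i _ => ?_
      rw [rowEq hm (fun k => T i k ω) (hω i) h]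
      refine Finset.sum_congr rfl fun k _ => ?_
      rw [Set.indicator_apply]
      congr 1
      simp only [hAdef, Set.mem_iUnion, eq_iff_iff]
      constructor
      · rintro ⟨l, h1, h2⟩; exact ⟨l, h1, h2⟩
      · rintro ⟨l, h1, h2⟩; exact ⟨l, h1, h2⟩
    rw [integral_congr_ae hae,
      integral_finset_sum _ (fun i _ => integrable_finset_sum _ (fun k _ => hint i k))]
    refine Finset.sum_congr rfl fun i _ => ?_
    rw [integral_finset_sum _ (fun k _ => hint i k)]
    refine Finset.sum_congr rfl fun k _ => ?_
    rw [integral_indicator_const (1:ℝ) (hAm i k)]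
    simp [Measure.real]
  -- upper bound per (i,k)
  have hup : ∀ i k, (P (A i k)).toReal ≤ (m:ℝ) * (Cf*h) := by
    intro i k
    have h1 : P (A i k) ≤ ∑ l : Fin m, P (Bs i k l) :=
      le_trans (measure_iUnion_le _) (le_of_eq (tsum_fintype _))
    have h2 : ∑ l : Fin m, P (Bs i k l) ≤ (m : ENNReal) * ENNReal.ofReal (Cf*h) := by
      calc ∑ l : Fin m, P (Bs i k l) ≤ ∑ _l : Fin m, ENNReal.ofReal (Cf*h) := by
            refine Finset.sum_le_sum fun l _ => ?_
            by_cases hl : k = l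
            · rw [← hl, hBkk]; simp
            · rw [hPB i k l hl]; exact hqub
        _ = (m : ENNReal) * ENNReal.ofReal (Cf*h) := by
            simp [Finset.sum_const, mul_comm]
    calc (P (A i k)).toReal
        ≤ ((m : ENNReal) * ENNReal.ofReal (Cf*h)).toReal :=
          ENNReal.toReal_mono (ENNReal.mul_ne_top (by simp) ENNReal.ofReal_ne_top)
            (h1.trans h2)
      _ = (m:ℝ) * (Cf*h) := by
          rw [ENNReal.toReal_mul, ENNReal.toReal_natCast,
            ENNReal.toReal_ofReal (by positivity)]
  -- lower bound per (i,k)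
  have hlow : ∀ i k, ((m:ℝ)-1) * qI.toReal
      - (1/2) * (((m:ℝ)*m - m) * ((Cf*h)*(Cf*h))) ≤ (P (A i k)).toReal := by
    intro i k
    have hInt1 : ∀ l, Integrable ((Bs i k l).indicator (fun _ => (1:ℝ))) P :=
      fun l => (integrable_const 1).indicator (hBsm i k l)
    have hInt2 : ∀ p : Fin m × Fin m,
        Integrable ((Bs i k p.1 ∩ Bs i k p.2).indicator (fun _ => (1:ℝ))) P :=
      fun p => (integrable_const 1).indicator ((hBsm i k p.1).inter (hBsm i k p.2))
    have hptw : ∀ ω, (∑ l : Fin m, (Bs i k l).indicator (fun _ => (1:ℝ)) ω)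
        - (1/2) * ∑ p ∈ Finset.univ.offDiag,
            ((Bs i k p.1 ∩ Bs i k p.2).indicator (fun _ => (1:ℝ)) ω)
        ≤ (A i k).indicator (fun _ => (1:ℝ)) ω := by
      intro ω
      have hb := bonf_pointwise (fun l => ω ∈ Bs i k l)
      simp only [Set.indicator_apply, Set.mem_inter_iff, hAdef, Set.mem_iUnion]
      exact hb
    have hIntL : Integrable (fun ω => (∑ l : Fin m, (Bs i k l).indicator (fun _ => (1:ℝ)) ω)
        - (1/2) * ∑ p ∈ Finset.univ.offDiag,
            ((Bs i k p.1 ∩ Bs i k p.2).indicator (fun _ => (1:ℝ)) ω)) P :=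
      (integrable_finset_sum _ fun l _ => hInt1 l).sub
        ((integrable_finset_sum _ fun p _ => hInt2 p).const_mul (1/2))
    have hEQL : ∫ ω, ((∑ l : Fin m, (Bs i k l).indicator (fun _ => (1:ℝ)) ω)
        - (1/2) * ∑ p ∈ Finset.univ.offDiag,
            ((Bs i k p.1 ∩ Bs i k p.2).indicator (fun _ => (1:ℝ)) ω)) ∂P
        = (∑ l : Fin m, (P (Bs i k l)).toReal)
          - (1/2) * ∑ p ∈ Finset.univ.offDiag, (P (Bs i k p.1 ∩ Bs i k p.2)).toReal := by
      rw [integral_sub (integrable_finset_sum _ fun l _ => hInt1 l)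
          ((integrable_finset_sum _ fun p _ => hInt2 p).const_mul (1/2)),
        integral_finset_sum _ (fun l _ => hInt1 l), integral_const_mul,
        integral_finset_sum _ (fun p _ => hInt2 p)]
      congr 1
      · exact Finset.sum_congr rfl fun l _ => by
          rw [integral_indicator_const (1:ℝ) (hBsm i k l)]; simp [Measure.real]
      · congr 1
        exact Finset.sum_congr rfl fun p _ => by
          rw [integral_indicator_const (1:ℝ) ((hBsm i k p.1).inter (hBsm i k p.2))]; simp [Measure.real]
    have hEQR : ∫ ω, (A i k).indicator (fun _ => (1:ℝ)) ω ∂P = (P (A i k)).toReal := by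
      rw [integral_indicator_const (1:ℝ) (hAm i k)]; simp [Measure.real]
    have hmono2 : (∑ l : Fin m, (P (Bs i k l)).toReal)
        - (1/2) * ∑ p ∈ Finset.univ.offDiag, (P (Bs i k p.1 ∩ Bs i k p.2)).toReal
        ≤ (P (A i k)).toReal := by
      rw [← hEQL, ← hEQR]
      exact integral_mono hIntL (hint i k) hptw
    refine le_trans ?_ hmono2
    apply sub_le_sub
    · -- first sum equals (m-1) * qI.toReal
      have : ∑ l : Fin m, (P (Bs i k l)).toReal
          = ∑ l ∈ Finset.univ.erase k, (P (Bs i k l)).toReal + (P (Bs i k k)).toReal := by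
        rw [Finset.sum_erase_add _ _ (Finset.mem_univ k)]
      rw [this, hBkk i k]
      simp only [measure_empty, ENNReal.toReal_zero, add_zero]
      have hcongr : ∀ l ∈ Finset.univ.erase k, (P (Bs i k l)).toReal = qI.toReal :=
        fun l hl => by rw [hPB i k l (Ne.symm (Finset.mem_erase.mp hl).1)]
      rw [Finset.sum_congr rfl hcongr, Finset.sum_const, Finset.card_erase_of_mem
        (Finset.mem_univ k), Finset.card_univ, Fintype.card_fin, nsmul_eq_mul]
      have : ((m - 1 : ℕ) : ℝ) = (m:ℝ) - 1 := by
        have : 1 ≤ m := by omega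
        push_cast [Nat.cast_sub this]
        ring
      rw [this]
    · -- second sum bound
      apply mul_le_mul_of_nonneg_left _ (by norm_num : (0:ℝ) ≤ 1/2)
      calc ∑ p ∈ Finset.univ.offDiag, (P (Bs i k p.1 ∩ Bs i k p.2)).toReal
          ≤ ∑ _p ∈ (Finset.univ : Finset (Fin m)).offDiag, (Cf*h)*(Cf*h) := by
            refine Finset.sum_le_sum fun p hp => ?_
            have hpq := (Finset.mem_offDiag.mp hp).2.2
            by_cases h1 : k = p.1
            · rw [← h1, hBkk]
              simp only [Set.empty_inter, measure_empty, ENNReal.toReal_zero]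
              positivity
            · by_cases h2 : k = p.2
              · rw [← h2, hBkk]
                simp only [Set.inter_empty, measure_empty, ENNReal.toReal_zero]
                positivity
              · exact ENNReal.toReal_le_of_le_ofReal (by positivity)
                  (hPBB i k p.1 p.2 h1 h2 hpq)
        _ = (((m:ℝ)*m - m)) * ((Cf*h)*(Cf*h)) := by
            rw [Finset.sum_const, Finset.offDiag_card, Finset.card_univ, Fintype.card_fin,
              nsmul_eq_mul]
            have hle : m ≤ m * m := Nat.le_mul_of_pos_left m (by omega)
            have : ((m * m - m : ℕ) : ℝ) = (m:ℝ)*m - m := by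
              push_cast [Nat.cast_sub hle]; ring
            rw [this]
  -- put everything together
  rw [hEG]
  constructor
  · -- lower bound
    have hL : (m:ℝ) * (cf^2 * h) / 8 ≤ ((m:ℝ)-1) * qI.toReal
        - (1/2) * (((m:ℝ)*m - m) * ((Cf*h)*(Cf*h))) := by
      have hA1 : ((m:ℝ)/2) * ((cf*h)*(cf*(1/2))) ≤ ((m:ℝ)-1) * qI.toReal := by
        apply mul_le_mul (by linarith) hq1 (by positivity) (by linarith)
      have e1 : ((m:ℝ)*m - m) * ((Cf*h)*(Cf*h)) ≤ ((m:ℝ)*h) * ((m:ℝ)*(Cf*Cf)*h) := by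
        nlinarith [sq_nonneg (Cf*h), mul_pos hCf0 hh]
      have e2 : ((m:ℝ)*h) * ((m:ℝ)*(Cf*Cf)*h) ≤ (cf^2/(4*Cf^2)) * ((m:ℝ)*(Cf*Cf)*h) :=
        mul_le_mul_of_nonneg_right hδ2 (by positivity)
      have e3 : (cf^2/(4*Cf^2)) * ((m:ℝ)*(Cf*Cf)*h) = (m:ℝ)*cf^2*h/4 := by
        field_simp
      nlinarith
    calc min (cf^2/8) Cf * (n:ℝ) * (m:ℝ)^2 * h
        ≤ (cf^2/8) * (n:ℝ) * (m:ℝ)^2 * h := by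
          have h1 : min (cf^2/8) Cf ≤ cf^2/8 := min_le_left _ _
          have : (0:ℝ) ≤ (n:ℝ) * (m:ℝ)^2 * h := by positivity
          nlinarith
      _ = (n:ℝ) * ((m:ℝ) * ((m:ℝ) * (cf^2 * h) / 8)) := by ring
      _ ≤ (n:ℝ) * ((m:ℝ) * (((m:ℝ)-1) * qI.toReal
            - (1/2) * (((m:ℝ)*m - m) * ((Cf*h)*(Cf*h))))) := by
          apply mul_le_mul_of_nonneg_left _ (by positivity)
          apply mul_le_mul_of_nonneg_left hL (by positivity)
      _ ≤ ∑ i : Fin n, ∑ k : Fin m, (P (A i k)).toReal := by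
          have : ∀ i : Fin n, (m:ℝ) * (((m:ℝ)-1) * qI.toReal
              - (1/2) * (((m:ℝ)*m - m) * ((Cf*h)*(Cf*h))))
              ≤ ∑ k : Fin m, (P (A i k)).toReal := by
            intro i
            calc (m:ℝ) * (((m:ℝ)-1) * qI.toReal
                - (1/2) * (((m:ℝ)*m - m) * ((Cf*h)*(Cf*h))))
                = ∑ _k : Fin m, (((m:ℝ)-1) * qI.toReal
                  - (1/2) * (((m:ℝ)*m - m) * ((Cf*h)*(Cf*h)))) := by
                  rw [Finset.sum_const, Finset.card_univ, Fintype.card_fin, nsmul_eq_mul]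
              _ ≤ ∑ k : Fin m, (P (A i k)).toReal :=
                  Finset.sum_le_sum fun k _ => hlow i k
          calc (n:ℝ) * ((m:ℝ) * (((m:ℝ)-1) * qI.toReal
              - (1/2) * (((m:ℝ)*m - m) * ((Cf*h)*(Cf*h)))))
              = ∑ _i : Fin n, (m:ℝ) * (((m:ℝ)-1) * qI.toReal
                - (1/2) * (((m:ℝ)*m - m) * ((Cf*h)*(Cf*h)))) := by
                rw [Finset.sum_const, Finset.card_univ, Fintype.card_fin, nsmul_eq_mul]
            _ ≤ ∑ i : Fin n, ∑ k : Fin m, (P (A i k)).toReal :=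
                Finset.sum_le_sum fun i _ => this i
  · -- upper bound
    calc ∑ i : Fin n, ∑ k : Fin m, (P (A i k)).toReal
        ≤ ∑ _i : Fin n, ∑ _k : Fin m, (m:ℝ) * (Cf*h) :=
          Finset.sum_le_sum fun i _ => Finset.sum_le_sum fun k _ => hup i k
      _ = (n:ℝ) * ((m:ℝ) * ((m:ℝ) * (Cf*h))) := by
          simp only [Finset.sum_const, Finset.card_univ, Fintype.card_fin, nsmul_eq_mul]
      _ = Cf * (n:ℝ) * (m:ℝ)^2 * h := by ring
end
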